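/- arXiv:1805.02093 — 4 statements merged into one kernel-verified Lean document; each statement's English description precedes it below -/
import Mathlib

section
/- If the pair (A,P) is (h,k)-dichotomic with (P_n) strongly invariant for the system (A), then the sequence of norms defined by |||x|||_n = sup_{m ≥ n} (h_m/h_n)‖A_m^n P_n x‖ + sup_{p ≤ n} (k_n/k_p)‖B_n^p Q_n x‖, for all n ∈ ℕ and x ∈ X, is a well-defined sequence of norms compatible with (P_n). -/
open ContinuousLinearMap Filter

noncomputable section

variable {X : Type*} [NormedAddCommGroup X] [NormedSpace ℝ X]

/-- The evolution operator `A_m^n` associated to the linear difference system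
`x_{n+1} = A_n x_n`: `A_m^n = A_{m-1} ⋯ A_n` for `m > n` and `A_n^n = I`. -/
def evol (A : ℕ → X →L[ℝ] X) : ℕ → ℕ → X →L[ℝ] X
  | 0, _ => 1
  | m + 1, n => if m + 1 ≤ n then 1 else A m ∘L evol A m n

/-- `P` is a projectors sequence. -/
def ProjSeq (P : ℕ → X →L[ℝ] X) : Prop := ∀ n, P n ∘L P n = P n

/-- The projectors sequence `P` is invariant for the system `(A)`. -/
def InvariantFor (A P : ℕ → X →L[ℝ] X) : Prop := ∀ n, A n ∘L P n = P (n + 1) ∘L A n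

/-- The projectors sequence `P` is strongly invariant for the system `(A)`: it is invariant and
the restriction of `A_m^n` to `Ker P_n` is an isomorphism from `Ker P_n` onto `Ker P_m`. -/
def StronglyInvariantFor (A P : ℕ → X →L[ℝ] X) : Prop :=
  InvariantFor A P ∧ ∀ m n : ℕ, n ≤ m →
    Set.BijOn (evol A m n) (LinearMap.ker (P n : X →ₗ[ℝ] X) : Set X) (LinearMap.ker (P m : X →ₗ[ℝ] X) : Set X)

/-- A growth rate: an increasing sequence with values in `[1, ∞)` tending to `∞`. -/
def IsGrowthRate (h : ℕ → ℝ) : Prop :=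
  StrictMono h ∧ (∀ n, 1 ≤ h n) ∧ Tendsto h atTop atTop

/-- The pair `(A, P)` is `(h,k)`-dichotomic. -/
def Dichotomic (A P : ℕ → X →L[ℝ] X) (h k : ℕ → ℝ) : Prop :=
  ∃ d : ℕ → ℝ, (∀ n, 1 ≤ d n) ∧ Monotone d ∧
    ∀ m n : ℕ, n ≤ m → ∀ x : X,
      h m * ‖evol A m n (P n x)‖ ≤ d n * (h n * ‖P n x‖) ∧
      k m * ‖(1 - P n) x‖ ≤ d m * (k n * ‖evol A m n ((1 - P n) x)‖)

/-- The pair `(A, P)` is uniformly `(h,k)`-dichotomic. -/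
def UniformDichotomic (A P : ℕ → X →L[ℝ] X) (h k : ℕ → ℝ) : Prop :=
  ∃ d : ℝ, 1 ≤ d ∧
    ∀ m n : ℕ, n ≤ m → ∀ x : X,
      h m * ‖evol A m n (P n x)‖ ≤ d * (h n * ‖P n x‖) ∧
      k m * ‖(1 - P n) x‖ ≤ d * (k n * ‖evol A m n ((1 - P n) x)‖)

/-- The pair `(A, P)` has `(h,k)`-growth. -/
def HasGrowth (A P : ℕ → X →L[ℝ] X) (h k : ℕ → ℝ) : Prop :=
  ∃ g : ℕ → ℝ, (∀ n, 1 ≤ g n) ∧ Monotone g ∧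
    ∀ m n : ℕ, n ≤ m → ∀ x : X,
      h n * ‖evol A m n (P n x)‖ ≤ g n * (h m * ‖P n x‖) ∧
      k n * ‖(1 - P n) x‖ ≤ g m * (k m * ‖evol A m n ((1 - P n) x)‖)

/-- `N` is a sequence of norms on `X`. -/
def IsNormSeq (N : ℕ → X → ℝ) : Prop :=
  ∀ n, (∀ x y, N n (x + y) ≤ N n x + N n y) ∧
    (∀ (a : ℝ) (x : X), N n (a • x) = |a| * N n x) ∧
    (∀ x, N n x = 0 ↔ x = 0)

/-- The sequence of norms `N` is compatible with the projectors sequence `P`. -/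
def NormsCompatible (N : ℕ → X → ℝ) (P : ℕ → X →L[ℝ] X) : Prop :=
  IsNormSeq N ∧ ∃ c : ℕ → ℝ, (∀ n, 1 ≤ c n) ∧ Monotone c ∧
    ∀ (n : ℕ) (x : X), ‖x‖ ≤ N n x ∧ N n x ≤ c n * (‖P n x‖ + ‖(1 - P n) x‖)

/-- The defining properties of the skew-evolution operator `B` associated to the pair `(A, P)`:
`A_m^n B_m^n Q_m = Q_m`, `B_m^n A_m^n Q_n = Q_n` and `B_m^n Q_m = Q_n B_m^n Q_m` for `m ≥ n`,
where `Q_n = I - P_n`. -/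
def SkewEvol (A P : ℕ → X →L[ℝ] X) (B : ℕ → ℕ → X →L[ℝ] X) : Prop :=
  ∀ m n : ℕ, n ≤ m →
    evol A m n ∘L (B m n ∘L (1 - P m)) = 1 - P m ∧
    B m n ∘L (evol A m n ∘L (1 - P n)) = 1 - P n ∧
    B m n ∘L (1 - P m) = (1 - P n) ∘L (B m n ∘L (1 - P m))

lemma evol_self (A : ℕ → X →L[ℝ] X) (n : ℕ) : evol A n n = 1 := by
  cases n with
  | zero => rfl
  | succ m => simp [evol]

lemma csSup_image_mul {c : ℝ} (hc : 0 ≤ c) (f : ℕ → ℝ) {s : Set ℕ} (hs : s.Nonempty)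
    (hb : BddAbove (f '' s)) :
    sSup ((fun m => c * f m) '' s) = c * sSup (f '' s) := by
  rcases eq_or_lt_of_le hc with h0 | h0
  · have : (fun m => c * f m) = fun _ => (0 : ℝ) := by funext m; rw [← h0]; ring
    rw [this, Set.Nonempty.image_const hs, csSup_singleton, ← h0, zero_mul]
  · have himg : (fun m => c * f m) '' s = (fun t => c * t) '' (f '' s) := by
      rw [← Set.image_comp]; rfl
    rw [himg]
    obtain ⟨M, hM⟩ := hb
    have hb2 : BddAbove ((fun t => c * t) '' (f '' s)) := by
      refine ⟨c * M, ?_⟩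
      rintro _ ⟨t, ht, rfl⟩
      exact mul_le_mul_of_nonneg_left (hM ht) hc
    apply le_antisymm
    · apply csSup_le ((hs.image f).image _)
      rintro _ ⟨t, ht, rfl⟩
      exact mul_le_mul_of_nonneg_left (le_csSup ⟨M, hM⟩ ht) hc
    · rw [mul_comm, ← le_div_iff₀ h0]
      apply csSup_le (hs.image f)
      rintro t ht
      rw [le_div_iff₀ h0, mul_comm]
      exact le_csSup hb2 ⟨t, ht, rfl⟩

theorem stmt_4 [CompleteSpace X] (A P : ℕ → X →L[ℝ] X) (B : ℕ → ℕ → X →L[ℝ] X)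
    (hP : ProjSeq P) (hSI : StronglyInvariantFor A P) (hB : SkewEvol A P B)
    (h k : ℕ → ℝ) (hh : IsGrowthRate h) (hk : IsGrowthRate k)
    (hD : Dichotomic A P h k) :
    NormsCompatible (fun n x =>
      sSup ((fun m => (h m / h n) * ‖evol A m n (P n x)‖) '' Set.Ici n) +
      sSup ((fun p => (k n / k p) * ‖B n p ((1 - P n) x)‖) '' Set.Iic n)) P := by
  obtain ⟨d, hd1, hdm, hdich⟩ := hD
  have hhpos : ∀ n, (0:ℝ) < h n := fun n => lt_of_lt_of_le one_pos (hh.2.1 n)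
  have hkpos : ∀ n, (0:ℝ) < k n := fun n => lt_of_lt_of_le one_pos (hk.2.1 n)
  set S1 : ℕ → X → Set ℝ :=
    fun n x => (fun m => (h m / h n) * ‖evol A m n (P n x)‖) '' Set.Ici n with hS1
  set S2 : ℕ → X → Set ℝ :=
    fun n x => (fun p => (k n / k p) * ‖B n p ((1 - P n) x)‖) '' Set.Iic n with hS2
  -- pointwise bounds
  have hub1 : ∀ n (x : X), ∀ y ∈ S1 n x, y ≤ d n * ‖P n x‖ := by
    rintro n x _ ⟨m, hm, rfl⟩
    have key := (hdich m n hm x).1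
    show (h m / h n) * ‖evol A m n (P n x)‖ ≤ d n * ‖P n x‖
    rw [div_mul_eq_mul_div, div_le_iff₀ (hhpos n)]
    calc h m * ‖evol A m n (P n x)‖ ≤ d n * (h n * ‖P n x‖) := key
      _ = d n * ‖P n x‖ * h n := by ring
  have hub2 : ∀ n (x : X), ∀ y ∈ S2 n x, y ≤ d n * ‖(1 - P n) x‖ := by
    rintro n x _ ⟨p, hp, rfl⟩
    have hp' : p ≤ n := hp
    have key := (hdich n p hp' (B n p ((1 - P n) x))).2
    have e1 : (1 - P p) (B n p ((1 - P n) x)) = B n p ((1 - P n) x) := by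
      have := congrArg (fun T : X →L[ℝ] X => T x) (hB n p hp').2.2
      simp only [ContinuousLinearMap.comp_apply] at this
      exact this.symm
    have e2 : evol A n p (B n p ((1 - P n) x)) = (1 - P n) x := by
      have := congrArg (fun T : X →L[ℝ] X => T x) (hB n p hp').1
      simp only [ContinuousLinearMap.comp_apply] at this
      exact this
    rw [e1] at key
    rw [e2] at key
    show (k n / k p) * ‖B n p ((1 - P n) x)‖ ≤ d n * ‖(1 - P n) x‖
    rw [div_mul_eq_mul_div, div_le_iff₀ (hkpos p)]
    calc k n * ‖B n p ((1 - P n) x)‖ ≤ d n * (k p * ‖(1 - P n) x‖) := key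
      _ = d n * ‖(1 - P n) x‖ * k p := by ring
  have hne1 : ∀ n (x : X), (S1 n x).Nonempty :=
    fun n x => ⟨_, n, le_refl n, rfl⟩
  have hne2 : ∀ n (x : X), (S2 n x).Nonempty :=
    fun n x => ⟨_, n, le_refl n, rfl⟩
  have hbdd1 : ∀ n (x : X), BddAbove (S1 n x) :=
    fun n x => ⟨d n * ‖P n x‖, fun y hy => hub1 n x y hy⟩
  have hbdd2 : ∀ n (x : X), BddAbove (S2 n x) :=
    fun n x => ⟨d n * ‖(1 - P n) x‖, fun y hy => hub2 n x y hy⟩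
  have hmem1 : ∀ n (x : X), ‖P n x‖ ∈ S1 n x := by
    intro n x
    refine ⟨n, le_refl n, ?_⟩
    show (h n / h n) * ‖evol A n n (P n x)‖ = ‖P n x‖
    rw [evol_self, div_self (ne_of_gt (hhpos n))]
    simp
  have hmem2 : ∀ n (x : X), ‖(1 - P n) x‖ ∈ S2 n x := by
    intro n x
    refine ⟨n, le_refl n, ?_⟩
    have e : B n n ((1 - P n) x) = (1 - P n) x := by
      have := congrArg (fun T : X →L[ℝ] X => T x) (hB n n le_rfl).1
      simp only [ContinuousLinearMap.comp_apply, evol_self,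
        ContinuousLinearMap.one_apply] at this
      exact this
    show (k n / k n) * ‖B n n ((1 - P n) x)‖ = ‖(1 - P n) x‖
    rw [e, div_self (ne_of_gt (hkpos n))]
    simp
  have hlow1 : ∀ n (x : X), ‖P n x‖ ≤ sSup (S1 n x) :=
    fun n x => le_csSup (hbdd1 n x) (hmem1 n x)
  have hlow2 : ∀ n (x : X), ‖(1 - P n) x‖ ≤ sSup (S2 n x) :=
    fun n x => le_csSup (hbdd2 n x) (hmem2 n x)
  have hup1 : ∀ n (x : X), sSup (S1 n x) ≤ d n * ‖P n x‖ :=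
    fun n x => csSup_le (hne1 n x) (hub1 n x)
  have hup2 : ∀ n (x : X), sSup (S2 n x) ≤ d n * ‖(1 - P n) x‖ :=
    fun n x => csSup_le (hne2 n x) (hub2 n x)
  have hxsum : ∀ n (x : X), P n x + (1 - P n) x = x := by
    intro n x
    simp [ContinuousLinearMap.sub_apply]
  have hnormle : ∀ n (x : X), ‖x‖ ≤ sSup (S1 n x) + sSup (S2 n x) := by
    intro n x
    calc ‖x‖ = ‖P n x + (1 - P n) x‖ := by rw [hxsum]
      _ ≤ ‖P n x‖ + ‖(1 - P n) x‖ := norm_add_le _ _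
      _ ≤ sSup (S1 n x) + sSup (S2 n x) := add_le_add (hlow1 n x) (hlow2 n x)
  constructor
  · -- norm sequence
    intro n
    refine ⟨?_, ?_, ?_⟩
    · -- triangle inequality
      intro x y
      have t1 : sSup (S1 n (x + y)) ≤ sSup (S1 n x) + sSup (S1 n y) := by
        apply csSup_le (hne1 n (x + y))
        rintro _ ⟨m, hm, rfl⟩
        have hnn : (0:ℝ) ≤ h m / h n := le_of_lt (div_pos (hhpos m) (hhpos n))
        calc (h m / h n) * ‖evol A m n (P n (x + y))‖
            = (h m / h n) * ‖evol A m n (P n x) + evol A m n (P n y)‖ := by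
              rw [map_add, map_add]
          _ ≤ (h m / h n) * (‖evol A m n (P n x)‖ + ‖evol A m n (P n y)‖) :=
              mul_le_mul_of_nonneg_left (norm_add_le _ _) hnn
          _ = (h m / h n) * ‖evol A m n (P n x)‖ + (h m / h n) * ‖evol A m n (P n y)‖ := by
              ring
          _ ≤ sSup (S1 n x) + sSup (S1 n y) :=
              add_le_add (le_csSup (hbdd1 n x) ⟨m, hm, rfl⟩)
                (le_csSup (hbdd1 n y) ⟨m, hm, rfl⟩)
      have t2 : sSup (S2 n (x + y)) ≤ sSup (S2 n x) + sSup (S2 n y) := by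
        apply csSup_le (hne2 n (x + y))
        rintro _ ⟨p, hp, rfl⟩
        have hnn : (0:ℝ) ≤ k n / k p := le_of_lt (div_pos (hkpos n) (hkpos p))
        calc (k n / k p) * ‖B n p ((1 - P n) (x + y))‖
            = (k n / k p) * ‖B n p ((1 - P n) x) + B n p ((1 - P n) y)‖ := by
              rw [map_add, map_add]
          _ ≤ (k n / k p) * (‖B n p ((1 - P n) x)‖ + ‖B n p ((1 - P n) y)‖) :=
              mul_le_mul_of_nonneg_left (norm_add_le _ _) hnn
          _ = (k n / k p) * ‖B n p ((1 - P n) x)‖ + (k n / k p) * ‖B n p ((1 - P n) y)‖ := by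
              ring
          _ ≤ sSup (S2 n x) + sSup (S2 n y) :=
              add_le_add (le_csSup (hbdd2 n x) ⟨p, hp, rfl⟩)
                (le_csSup (hbdd2 n y) ⟨p, hp, rfl⟩)
      have := add_le_add t1 t2
      linarith
    · -- homogeneity
      intro a x
      have f1 : (fun m => (h m / h n) * ‖evol A m n (P n (a • x))‖) =
          fun m => |a| * ((h m / h n) * ‖evol A m n (P n x)‖) := by
        funext m
        rw [map_smul, map_smul, norm_smul, Real.norm_eq_abs]
        ring
      have f2 : (fun p => (k n / k p) * ‖B n p ((1 - P n) (a • x))‖) =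
          fun p => |a| * ((k n / k p) * ‖B n p ((1 - P n) x)‖) := by
        funext p
        rw [map_smul, map_smul, norm_smul, Real.norm_eq_abs]
        ring
      have e1 : S1 n (a • x) =
          (fun m => |a| * ((h m / h n) * ‖evol A m n (P n x)‖)) '' Set.Ici n := by
        show (fun m => (h m / h n) * ‖evol A m n (P n (a • x))‖) '' Set.Ici n = _
        rw [f1]
      have e2 : S2 n (a • x) =
          (fun p => |a| * ((k n / k p) * ‖B n p ((1 - P n) x)‖)) '' Set.Iic n := by
        show (fun p => (k n / k p) * ‖B n p ((1 - P n) (a • x))‖) '' Set.Iic n = _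
        rw [f2]
      show sSup (S1 n (a • x)) + sSup (S2 n (a • x)) = |a| * (sSup (S1 n x) + sSup (S2 n x))
      rw [e1, e2,
        csSup_image_mul (abs_nonneg a) _ (Set.nonempty_Ici) (hbdd1 n x),
        csSup_image_mul (abs_nonneg a) _ (Set.nonempty_Iic) (hbdd2 n x)]
      ring
    · -- definiteness
      intro x
      constructor
      · intro h0
        have hx : ‖x‖ ≤ 0 := by
          have := hnormle n x
          simp only at h0
          linarith [this, le_of_eq h0]
        exact norm_le_zero_iff.mp hx
      · rintro rfl
        have z1 : S1 n (0 : X) = {0} := by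
          have : (fun m => (h m / h n) * ‖evol A m n (P n (0:X))‖) = fun _ => (0:ℝ) := by
            funext m; simp
          show (fun m => (h m / h n) * ‖evol A m n (P n (0:X))‖) '' Set.Ici n = {0}
          rw [this, Set.Nonempty.image_const Set.nonempty_Ici]
        have z2 : S2 n (0 : X) = {0} := by
          have : (fun p => (k n / k p) * ‖B n p ((1 - P n) (0:X))‖) = fun _ => (0:ℝ) := by
            funext p; simp
          show (fun p => (k n / k p) * ‖B n p ((1 - P n) (0:X))‖) '' Set.Iic n = {0}
          rw [this, Set.Nonempty.image_const Set.nonempty_Iic]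
        show sSup (S1 n (0:X)) + sSup (S2 n (0:X)) = 0
        rw [z1, z2, csSup_singleton]
        norm_num
  · -- compatibility
    refine ⟨d, hd1, hdm, fun n x => ⟨hnormle n x, ?_⟩⟩
    show sSup (S1 n x) + sSup (S2 n x) ≤ d n * (‖P n x‖ + ‖(1 - P n) x‖)
    have := add_le_add (hup1 n x) (hup2 n x)
    linarith

end
end

section
/- Let (P_n) be strongly invariant for the system (A) and let h, k be growth rates. The pair (A,P) is (h,k)-dichotomic if and only if there exists a sequence of norms 𝒩 = {|||·|||_n : n ∈ ℕ} compatible with (P_n) such that h_m|||A_m^n P_n x|||_m ≤ h_n|||x|||_n and k_m|||B_m^n Q_m x|||_n ≤ k_n|||x|||_m for all m ≥ n and all x ∈ X. -/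
open ContinuousLinearMap Filter

noncomputable section

variable {X : Type*} [NormedAddCommGroup X] [NormedSpace ℝ X]

lemma evol_self_apply (A : ℕ → X →L[ℝ] X) (n : ℕ) (x : X) : evol A n n x = x := by
  rw [evol_self]; rfl

lemma evol_succ (A : ℕ → X →L[ℝ] X) {m n : ℕ} (hnm : n ≤ m) :
    evol A (m + 1) n = A m ∘L evol A m n := by
  have : ¬ (m + 1 ≤ n) := by omega
  simp [evol, this]

lemma evol_comp (A : ℕ → X →L[ℝ] X) {n l m : ℕ} (hnl : n ≤ l) (hlm : l ≤ m) :
    evol A m l ∘L evol A l n = evol A m n := by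
  induction m, hlm using Nat.le_induction with
  | base => rw [evol_self]; ext x; simp
  | succ m hm ih => rw [evol_succ A hm, evol_succ A (hnl.trans hm), comp_assoc, ih]

lemma evol_comp_apply (A : ℕ → X →L[ℝ] X) {n l m : ℕ} (hnl : n ≤ l) (hlm : l ≤ m) (x : X) :
    evol A m l (evol A l n x) = evol A m n x := by
  have := evol_comp A hnl hlm
  calc evol A m l (evol A l n x) = (evol A m l ∘L evol A l n) x := rfl
    _ = evol A m n x := by rw [this]

lemma evol_P {A P : ℕ → X →L[ℝ] X} (hinv : InvariantFor A P) {n m : ℕ} (hnm : n ≤ m) :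
    evol A m n ∘L P n = P m ∘L evol A m n := by
  induction m, hnm using Nat.le_induction with
  | base => rw [evol_self]; ext x; simp
  | succ m hm ih =>
      rw [evol_succ A hm, comp_assoc, ih, ← comp_assoc, hinv m, comp_assoc]

lemma evol_P_apply {A P : ℕ → X →L[ℝ] X} (hinv : InvariantFor A P) {n m : ℕ} (hnm : n ≤ m)
    (x : X) : evol A m n (P n x) = P m (evol A m n x) := by
  have := evol_P hinv hnm
  calc evol A m n (P n x) = (evol A m n ∘L P n) x := rfl
    _ = P m (evol A m n x) := by rw [this]; rfl

instance instNonemptyGe (n : ℕ) : Nonempty {m : ℕ // n ≤ m} := ⟨⟨n, le_rfl⟩⟩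
instance instNonemptyLe (n : ℕ) : Nonempty {m : ℕ // m ≤ n} := ⟨⟨n, le_rfl⟩⟩

theorem stmt_6 [CompleteSpace X] (A P : ℕ → X →L[ℝ] X) (B : ℕ → ℕ → X →L[ℝ] X)
    (hP : ProjSeq P) (hSI : StronglyInvariantFor A P) (hB : SkewEvol A P B)
    (h k : ℕ → ℝ) (hh : IsGrowthRate h) (hk : IsGrowthRate k) :
    Dichotomic A P h k ↔
      ∃ N : ℕ → X → ℝ, NormsCompatible N P ∧
        ∀ m n : ℕ, n ≤ m → ∀ x : X,
          h m * N m (evol A m n (P n x)) ≤ h n * N n x ∧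
          k m * N n (B m n ((1 - P m) x)) ≤ k n * N m x := by
  have hpos : ∀ n, (0:ℝ) < h n := fun n => lt_of_lt_of_le one_pos (hh.2.1 n)
  have kpos : ∀ n, (0:ℝ) < k n := fun n => lt_of_lt_of_le one_pos (hk.2.1 n)
  have hPP : ∀ (n : ℕ) (x : X), P n (P n x) = P n x := fun n x => by
    have := DFunLike.congr_fun (hP n) x; simpa using this
  have hPQ : ∀ (n : ℕ) (x : X), P n ((1 - P n) x) = 0 := fun n x => by
    rw [ContinuousLinearMap.sub_apply, ContinuousLinearMap.one_apply, map_sub, hPP, sub_self]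
  have hQP : ∀ (n : ℕ) (x : X), (1 - P n) (P n x) = 0 := fun n x => by
    rw [ContinuousLinearMap.sub_apply, ContinuousLinearMap.one_apply, hPP, sub_self]
  have hBe : ∀ m n : ℕ, n ≤ m → ∀ x : X,
      evol A m n (B m n ((1 - P m) x)) = (1 - P m) x ∧
      B m n (evol A m n ((1 - P n) x)) = (1 - P n) x ∧
      B m n ((1 - P m) x) = (1 - P n) (B m n ((1 - P m) x)) := by
    intro m n hmn x
    obtain ⟨e1, e2, e3⟩ := hB m n hmn
    refine ⟨?_, ?_, ?_⟩
    · have := DFunLike.congr_fun e1 x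
      simpa only [ContinuousLinearMap.comp_apply] using this
    · have := DFunLike.congr_fun e2 x
      simpa only [ContinuousLinearMap.comp_apply] using this
    · have := DFunLike.congr_fun e3 x
      simpa only [ContinuousLinearMap.comp_apply] using this
  constructor
  · rintro ⟨d, hd1, hdmono, hdich⟩
    set N1 : ℕ → X → ℝ :=
      fun n x => ⨆ m : {l : ℕ // n ≤ l}, (h m / h n) * ‖evol A (m : ℕ) n (P n x)‖ with hN1def
    set N2 : ℕ → X → ℝ :=
      fun n x => ⨆ j : {l : ℕ // l ≤ n}, (k n / k j) * ‖B n (j : ℕ) ((1 - P n) x)‖ with hN2def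
    have hb1 : ∀ (n : ℕ) (x : X) (m : {l : ℕ // n ≤ l}),
        (h m / h n) * ‖evol A (m : ℕ) n (P n x)‖ ≤ d n * ‖P n x‖ := by
      intro n x m
      rw [div_mul_eq_mul_div, div_le_iff₀ (hpos n)]
      calc h m * ‖evol A (m : ℕ) n (P n x)‖ ≤ d n * (h n * ‖P n x‖) := (hdich m n m.2 x).1
        _ = d n * ‖P n x‖ * h n := by ring
    have hb2 : ∀ (n : ℕ) (x : X) (j : {l : ℕ // l ≤ n}),
        (k n / k j) * ‖B n (j : ℕ) ((1 - P n) x)‖ ≤ d n * ‖(1 - P n) x‖ := by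
      intro n x j
      obtain ⟨e1, _, e3⟩ := hBe n j j.2 x
      have H := (hdich n j j.2 (B n (j : ℕ) ((1 - P n) x))).2
      rw [← e3, e1] at H
      rw [div_mul_eq_mul_div, div_le_iff₀ (kpos j)]
      calc k n * ‖B n (j : ℕ) ((1 - P n) x)‖ ≤ d n * (k j * ‖(1 - P n) x‖) := H
        _ = d n * ‖(1 - P n) x‖ * k j := by ring
    have hbdd1 : ∀ (n : ℕ) (x : X), BddAbove (Set.range
        fun m : {l : ℕ // n ≤ l} => (h m / h n) * ‖evol A (m : ℕ) n (P n x)‖) :=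
      fun n x => ⟨d n * ‖P n x‖, by rintro y ⟨m, rfl⟩; exact hb1 n x m⟩
    have hbdd2 : ∀ (n : ℕ) (x : X), BddAbove (Set.range
        fun j : {l : ℕ // l ≤ n} => (k n / k j) * ‖B n (j : ℕ) ((1 - P n) x)‖) :=
      fun n x => ⟨d n * ‖(1 - P n) x‖, by rintro y ⟨j, rfl⟩; exact hb2 n x j⟩
    have hBnn : ∀ (n : ℕ) (x : X), B n n ((1 - P n) x) = (1 - P n) x := by
      intro n x
      have := (hBe n n le_rfl x).2.1
      rwa [evol_self_apply] at this
    have hge1 : ∀ (n : ℕ) (x : X), ‖P n x‖ ≤ N1 n x := by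
      intro n x
      have := le_ciSup (hbdd1 n x) ⟨n, le_rfl⟩
      simpa only [hN1def, evol_self_apply, div_self (hpos n).ne', one_mul] using this
    have hge2 : ∀ (n : ℕ) (x : X), ‖(1 - P n) x‖ ≤ N2 n x := by
      intro n x
      have := le_ciSup (hbdd2 n x) ⟨n, le_rfl⟩
      simpa only [hN2def, hBnn, div_self (kpos n).ne', one_mul] using this
    have hN1nonneg : ∀ (n : ℕ) (x : X), 0 ≤ N1 n x :=
      fun n x => (norm_nonneg _).trans (hge1 n x)
    have hN2nonneg : ∀ (n : ℕ) (x : X), 0 ≤ N2 n x :=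
      fun n x => (norm_nonneg _).trans (hge2 n x)
    have hub1 : ∀ (n : ℕ) (x : X), N1 n x ≤ d n * ‖P n x‖ := by
      intro n x; simp only [hN1def]; exact ciSup_le (hb1 n x)
    have hub2 : ∀ (n : ℕ) (x : X), N2 n x ≤ d n * ‖(1 - P n) x‖ := by
      intro n x; simp only [hN2def]; exact ciSup_le (hb2 n x)
    have hxle : ∀ (n : ℕ) (x : X), ‖x‖ ≤ N1 n x + N2 n x := by
      intro n x
      have hx : x = P n x + (1 - P n) x := by
        rw [ContinuousLinearMap.sub_apply, ContinuousLinearMap.one_apply]; abel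
      calc ‖x‖ = ‖P n x + (1 - P n) x‖ := by rw [← hx]
        _ ≤ ‖P n x‖ + ‖(1 - P n) x‖ := norm_add_le _ _
        _ ≤ N1 n x + N2 n x := add_le_add (hge1 n x) (hge2 n x)
    have htri1 : ∀ (n : ℕ) (x y : X), N1 n (x + y) ≤ N1 n x + N1 n y := by
      intro n x y
      simp only [hN1def]
      refine ciSup_le fun m => ?_
      calc (h m / h n) * ‖evol A (m : ℕ) n (P n (x + y))‖
          ≤ (h m / h n) * (‖evol A (m : ℕ) n (P n x)‖ + ‖evol A (m : ℕ) n (P n y)‖) := by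
            rw [map_add, map_add]
            exact mul_le_mul_of_nonneg_left (norm_add_le _ _)
              (div_nonneg (hpos _).le (hpos n).le)
        _ = (h m / h n) * ‖evol A (m : ℕ) n (P n x)‖
            + (h m / h n) * ‖evol A (m : ℕ) n (P n y)‖ := by ring
        _ ≤ _ := add_le_add (le_ciSup (hbdd1 n x) m) (le_ciSup (hbdd1 n y) m)
    have htri2 : ∀ (n : ℕ) (x y : X), N2 n (x + y) ≤ N2 n x + N2 n y := by
      intro n x y
      simp only [hN2def]
      refine ciSup_le fun j => ?_
      calc (k n / k j) * ‖B n (j : ℕ) ((1 - P n) (x + y))‖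
          ≤ (k n / k j) * (‖B n (j : ℕ) ((1 - P n) x)‖ + ‖B n (j : ℕ) ((1 - P n) y)‖) := by
            rw [map_add, map_add]
            exact mul_le_mul_of_nonneg_left (norm_add_le _ _)
              (div_nonneg (kpos n).le (kpos _).le)
        _ = (k n / k j) * ‖B n (j : ℕ) ((1 - P n) x)‖
            + (k n / k j) * ‖B n (j : ℕ) ((1 - P n) y)‖ := by ring
        _ ≤ _ := add_le_add (le_ciSup (hbdd2 n x) j) (le_ciSup (hbdd2 n y) j)
    have hsm1 : ∀ (n : ℕ) (a : ℝ) (x : X), N1 n (a • x) = |a| * N1 n x := by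
      intro n a x
      simp only [hN1def]
      rw [Real.mul_iSup_of_nonneg (abs_nonneg a)]
      exact iSup_congr fun m => by
        rw [map_smul, map_smul, norm_smul, Real.norm_eq_abs]; ring
    have hsm2 : ∀ (n : ℕ) (a : ℝ) (x : X), N2 n (a • x) = |a| * N2 n x := by
      intro n a x
      simp only [hN2def]
      rw [Real.mul_iSup_of_nonneg (abs_nonneg a)]
      exact iSup_congr fun j => by
        rw [map_smul, map_smul, norm_smul, Real.norm_eq_abs]; ring
    have hz1 : ∀ n : ℕ, N1 n 0 = 0 := by
      intro n; simp only [hN1def, map_zero, norm_zero, mul_zero, ciSup_const]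
    have hz2 : ∀ n : ℕ, N2 n 0 = 0 := by
      intro n; simp only [hN2def, map_zero, norm_zero, mul_zero, ciSup_const]
    have hBco : ∀ (j n m : ℕ), j ≤ n → n ≤ m → ∀ x : X,
        B n j ((1 - P n) (B m n ((1 - P m) x))) = B m j ((1 - P m) x) := by
      intro j n m hjn hnm x
      obtain ⟨f1, _, f3⟩ := hBe m n hnm x
      set w := B m n ((1 - P m) x) with hw
      have hQw : (1 - P n) w = w := f3.symm
      obtain ⟨g1, _, g3⟩ := hBe n j hjn w
      set u := B n j ((1 - P n) w) with hu
      obtain ⟨t1, _, t3⟩ := hBe m j (hjn.trans hnm) x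
      set v := B m j ((1 - P m) x) with hv
      have hQu : (1 - P j) u = u := g3.symm
      have hPu : P j u = 0 := by rw [← hQu]; exact hPQ j u
      have hQv : (1 - P j) v = v := t3.symm
      have hPv : P j v = 0 := by rw [← hQv]; exact hPQ j v
      have hu_ker : u ∈ (LinearMap.ker (P j : X →ₗ[ℝ] X) : Set X) := by
        simp [LinearMap.mem_ker, hPu]
      have hv_ker : v ∈ (LinearMap.ker (P j : X →ₗ[ℝ] X) : Set X) := by
        simp [LinearMap.mem_ker, hPv]
      have hAu : evol A m j u = (1 - P m) x := by
        calc evol A m j u = evol A m n (evol A n j u) := (evol_comp_apply A hjn hnm u).symm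
          _ = evol A m n w := by rw [hu, g1, hQw]
          _ = (1 - P m) x := f1
      have hAv : evol A m j v = (1 - P m) x := t1
      exact (hSI.2 m j (hjn.trans hnm)).injOn hu_ker hv_ker (hAu.trans hAv.symm)
    refine ⟨fun n x => N1 n x + N2 n x, ⟨?_, d, hd1, hdmono, ?_⟩, ?_⟩
    · -- IsNormSeq
      intro n
      refine ⟨fun x y => ?_, fun a x => ?_, fun x => ?_⟩
      · show N1 n (x + y) + N2 n (x + y) ≤ (N1 n x + N2 n x) + (N1 n y + N2 n y)
        calc N1 n (x + y) + N2 n (x + y)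
            ≤ (N1 n x + N1 n y) + (N2 n x + N2 n y) := add_le_add (htri1 n x y) (htri2 n x y)
          _ = (N1 n x + N2 n x) + (N1 n y + N2 n y) := by ring
      · show N1 n (a • x) + N2 n (a • x) = |a| * (N1 n x + N2 n x)
        rw [hsm1, hsm2]; ring
      · show N1 n x + N2 n x = 0 ↔ x = 0
        constructor
        · intro h0
          have := hxle n x
          rw [h0] at this
          exact norm_le_zero_iff.mp this
        · rintro rfl
          rw [hz1 n, hz2 n, add_zero]
    · -- compatibility bounds
      intro n x
      refine ⟨hxle n x, ?_⟩
      show N1 n x + N2 n x ≤ d n * (‖P n x‖ + ‖(1 - P n) x‖)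
      calc N1 n x + N2 n x ≤ d n * ‖P n x‖ + d n * ‖(1 - P n) x‖ :=
            add_le_add (hub1 n x) (hub2 n x)
        _ = d n * (‖P n x‖ + ‖(1 - P n) x‖) := by ring
    · -- main inequalities
      intro m n hmn x
      constructor
      · show h m * (N1 m (evol A m n (P n x)) + N2 m (evol A m n (P n x)))
            ≤ h n * (N1 n x + N2 n x)
        set y := evol A m n (P n x) with hy
        have hPy : P m y = y := by
          rw [hy, evol_P_apply hSI.1 hmn x, hPP]
        have hQy : (1 - P m) y = 0 := by
          rw [ContinuousLinearMap.sub_apply, ContinuousLinearMap.one_apply, hPy, sub_self]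
        have hN2y : N2 m y = 0 := by
          simp only [hN2def, hQy, map_zero, norm_zero, mul_zero, ciSup_const]
        have key : N1 m y ≤ (h n / h m) * N1 n x := by
          simp only [hN1def]
          refine ciSup_le fun l => ?_
          rw [hPy, hy, evol_comp_apply A hmn l.2]
          have h1 : (h l / h m) * ‖evol A (l : ℕ) n (P n x)‖
              = (h n / h m) * ((h l / h n) * ‖evol A (l : ℕ) n (P n x)‖) := by
            rw [← mul_assoc, div_mul_div_comm, mul_comm (h n) (h l),
              mul_div_mul_right _ _ (hpos n).ne']
          rw [h1]
          exact mul_le_mul_of_nonneg_left (le_ciSup (hbdd1 n x) ⟨(l : ℕ), hmn.trans l.2⟩)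
            (div_nonneg (hpos n).le (hpos m).le)
        calc h m * (N1 m y + N2 m y) = h m * N1 m y := by rw [hN2y, add_zero]
          _ ≤ h m * ((h n / h m) * N1 n x) := mul_le_mul_of_nonneg_left key (hpos m).le
          _ = h n * N1 n x := by
              rw [← mul_assoc, mul_div_assoc', mul_comm (h m) (h n),
                mul_div_assoc, div_self (hpos m).ne', mul_one]
          _ ≤ h n * (N1 n x + N2 n x) :=
              mul_le_mul_of_nonneg_left (le_add_of_nonneg_right (hN2nonneg n x)) (hpos n).le
      · show k m * (N1 n (B m n ((1 - P m) x)) + N2 n (B m n ((1 - P m) x)))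
            ≤ k n * (N1 m x + N2 m x)
        set z := B m n ((1 - P m) x) with hz
        have hQz : (1 - P n) z = z := (hBe m n hmn x).2.2.symm
        have hPz : P n z = 0 := by rw [← hQz]; exact hPQ n z
        have hN1z : N1 n z = 0 := by
          simp only [hN1def, hPz, map_zero, norm_zero, mul_zero, ciSup_const]
        have key : N2 n z ≤ (k n / k m) * N2 m x := by
          simp only [hN2def]
          refine ciSup_le fun j => ?_
          rw [hz, hBco (j : ℕ) n m j.2 hmn x]
          have h1 : (k n / k j) * ‖B m (j : ℕ) ((1 - P m) x)‖
              = (k n / k m) * ((k m / k j) * ‖B m (j : ℕ) ((1 - P m) x)‖) := by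
            rw [← mul_assoc, div_mul_div_comm, mul_comm (k n) (k m),
              mul_div_mul_left _ _ (kpos m).ne']
          rw [h1]
          exact mul_le_mul_of_nonneg_left (le_ciSup (hbdd2 m x) ⟨(j : ℕ), j.2.trans hmn⟩)
            (div_nonneg (kpos n).le (kpos m).le)
        calc k m * (N1 n z + N2 n z) = k m * N2 n z := by rw [hN1z, zero_add]
          _ ≤ k m * ((k n / k m) * N2 m x) := mul_le_mul_of_nonneg_left key (kpos m).le
          _ = k n * N2 m x := by
              rw [← mul_assoc, mul_div_assoc', mul_comm (k m) (k n),
                mul_div_assoc, div_self (kpos m).ne', mul_one]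
          _ ≤ k n * (N1 m x + N2 m x) :=
              mul_le_mul_of_nonneg_left (le_add_of_nonneg_left (hN1nonneg m x)) (kpos n).le
  · rintro ⟨N, ⟨hNseq, c, hc1, hcmono, hcomp⟩, hmain⟩
    refine ⟨c, hc1, hcmono, fun m n hmn x => ⟨?_, ?_⟩⟩
    · have H := (hmain m n hmn (P n x)).1
      rw [hPP n x] at H
      have l1 : ‖evol A m n (P n x)‖ ≤ N m (evol A m n (P n x)) := (hcomp m _).1
      have l2 : N n (P n x) ≤ c n * (‖P n (P n x)‖ + ‖(1 - P n) (P n x)‖) := (hcomp n _).2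
      rw [hPP n x, hQP n x, norm_zero, add_zero] at l2
      calc h m * ‖evol A m n (P n x)‖ ≤ h m * N m (evol A m n (P n x)) :=
            mul_le_mul_of_nonneg_left l1 (hpos m).le
        _ ≤ h n * N n (P n x) := H
        _ ≤ h n * (c n * ‖P n x‖) := mul_le_mul_of_nonneg_left l2 (hpos n).le
        _ = c n * (h n * ‖P n x‖) := by ring
    · set y := evol A m n ((1 - P n) x) with hy
      have hPy : P m y = 0 := by
        rw [hy, ← evol_P_apply hSI.1 hmn, hPQ n x, map_zero]
      have hQy : (1 - P m) y = y := by
        rw [ContinuousLinearMap.sub_apply, ContinuousLinearMap.one_apply, hPy, sub_zero]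
      have hBy : B m n ((1 - P m) y) = (1 - P n) x := by
        rw [hQy, hy]; exact (hBe m n hmn x).2.1
      have H := (hmain m n hmn y).2
      rw [hBy] at H
      have l1 : ‖(1 - P n) x‖ ≤ N n ((1 - P n) x) := (hcomp n _).1
      have l2 : N m y ≤ c m * (‖P m y‖ + ‖(1 - P m) y‖) := (hcomp m _).2
      rw [hPy, norm_zero, zero_add, hQy] at l2
      calc k m * ‖(1 - P n) x‖ ≤ k m * N n ((1 - P n) x) :=
            mul_le_mul_of_nonneg_left l1 (kpos m).le
        _ ≤ k n * N m y := H
        _ ≤ k n * (c m * ‖y‖) := mul_le_mul_of_nonneg_left l2 (kpos n).le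
        _ = c m * (k n * ‖y‖) := by ring


end
end

section
/- Let (P_n) be strongly invariant for the system (A) and let h, k be growth rates. If there exists a nondecreasing sequence g : ℕ → [1,∞) such that h_n‖A_m^n P_n x‖ ≤ g_n h_m‖x‖ and k_n‖B_m^n Q_m x‖ ≤ g_m k_m‖x‖ for all m ≥ n and all x ∈ X, then the pair (A,P) has (h,k)-growth. -/
open ContinuousLinearMap Filter

noncomputable section

variable {X : Type*} [NormedAddCommGroup X] [NormedSpace ℝ X]

theorem stmt_9 [CompleteSpace X] (A P : ℕ → X →L[ℝ] X) (B : ℕ → ℕ → X →L[ℝ] X)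
    (hP : ProjSeq P) (hSI : StronglyInvariantFor A P) (hB : SkewEvol A P B)
    (h k : ℕ → ℝ) (hh : IsGrowthRate h) (hk : IsGrowthRate k)
    (hyp : ∃ g : ℕ → ℝ, (∀ n, 1 ≤ g n) ∧ Monotone g ∧
      ∀ m n : ℕ, n ≤ m → ∀ x : X,
        h n * ‖evol A m n (P n x)‖ ≤ g n * (h m * ‖x‖) ∧
        k n * ‖B m n ((1 - P m) x)‖ ≤ g m * (k m * ‖x‖)) :
    HasGrowth A P h k := by
  obtain ⟨g, hg1, hgmono, hgineq⟩ := hyp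
  refine ⟨g, hg1, hgmono, fun m n hmn x => ?_⟩
  constructor
  · have H := (hgineq m n hmn (P n x)).1
    have hPP : P n (P n x) = P n x := by
      have := congrArg (fun T : X →L[ℝ] X => T x) (hP n)
      simpa using this
    rwa [hPP] at H
  · set y := evol A m n ((1 - P n) x) with hy
    have hkerPn : (1 - P n) x ∈ (LinearMap.ker (P n : X →ₗ[ℝ] X) : Set X) := by
      have := congrArg (fun T : X →L[ℝ] X => T x) (hP n)
      simp only [ContinuousLinearMap.comp_apply] at this
      simp [LinearMap.mem_ker, sub_apply, one_apply, this]
    have hPmy : P m y = 0 := by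
      have := hSI.2 m n hmn |>.mapsTo hkerPn
      simpa only [SetLike.mem_coe, LinearMap.mem_ker, ContinuousLinearMap.coe_coe] using this
    have hQy : (1 - P m) y = y := by simp [sub_apply, one_apply, hPmy]
    have hBy : B m n y = (1 - P n) x := by
      have := congrArg (fun T : X →L[ℝ] X => T x) (hB m n hmn).2.1
      simpa only [ContinuousLinearMap.comp_apply] using this
    have H := (hgineq m n hmn y).2
    rwa [hQy, hBy] at H

end
end

section
/- Let (P_n) be strongly invariant for the system (A) and let h, k be growth rates. The pair (A,P) is (h,k)-dichotomic if and only if there exist a sequence of norms 𝒩 = {|||·|||_n : n ∈ ℕ} compatible with (P_n) and a nondecreasing sequence b : ℕ → [1,∞) such that Σ_{j=0}^{n} h_m|||A_m^j P_j x|||_m ≤ b_n h_n|||x|||_n and Σ_{j=0}^{n} (1/k_j)|||B_m^j Q_m x|||_j ≤ (b_m/k_m)|||x|||_m for all m ≥ n and all x ∈ X. -/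
open ContinuousLinearMap Filter

noncomputable section

variable {X : Type*} [NormedAddCommGroup X] [NormedSpace ℝ X]

lemma evol_succ_of_le (A : ℕ → X →L[ℝ] X) {m n : ℕ} (h : n ≤ m) :
    evol A (m + 1) n = A m ∘L evol A m n := by
  simp only [evol, if_neg (by omega : ¬ m + 1 ≤ n)]

lemma evol_comm_P {A P : ℕ → X →L[ℝ] X} (hinv : InvariantFor A P) :
    ∀ m n, n ≤ m → ∀ x, evol A m n (P n x) = P m (evol A m n x) := by
  intro m
  induction m with
  | zero =>
    intro n hn x
    have : n = 0 := Nat.le_zero.mp hn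
    subst this
    simp [evol_self]
  | succ m ih =>
    intro n hn x
    rcases Nat.eq_or_lt_of_le hn with he | hl
    · subst he; simp [evol_self]
    · have hn' : n ≤ m := Nat.lt_succ_iff.mp hl
      rw [evol_succ_of_le A hn', comp_apply, comp_apply, ih n hn' x]
      have := congrArg (fun T : X →L[ℝ] X => T (evol A m n x)) (hinv m)
      simpa using this

lemma evol_comm_Q {A P : ℕ → X →L[ℝ] X} (hinv : InvariantFor A P)
    (m n : ℕ) (hmn : n ≤ m) (x : X) :
    evol A m n ((1 - P n) x) = (1 - P m) (evol A m n x) := by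
  simp only [sub_apply, one_apply_eq_self, map_sub]
  rw [evol_comm_P hinv m n hmn x]

theorem stmt_16 [CompleteSpace X] (A P : ℕ → X →L[ℝ] X) (B : ℕ → ℕ → X →L[ℝ] X)
    (hP : ProjSeq P) (hSI : StronglyInvariantFor A P) (hB : SkewEvol A P B)
    (h k : ℕ → ℝ) (hh : IsGrowthRate h) (hk : IsGrowthRate k) :
    Dichotomic A P h k ↔
      ∃ N : ℕ → X → ℝ, NormsCompatible N P ∧
        ∃ b : ℕ → ℝ, (∀ n, 1 ≤ b n) ∧ Monotone b ∧
          ∀ m n : ℕ, n ≤ m → ∀ x : X,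
            (∑ j ∈ Finset.range (n + 1), h m * N m (evol A m j (P j x))) ≤
              b n * (h n * N n x) ∧
            (∑ j ∈ Finset.range (n + 1), N j (B m j ((1 - P m) x)) / k j) ≤
              b m * (N m x / k m) := by
  have hinv := hSI.1
  have hP' : ∀ n (x : X), P n (P n x) = P n x := by
    intro n x
    have := congrArg (fun T : X →L[ℝ] X => T x) (hP n)
    simpa using this
  have hQ' : ∀ n (x : X), (1 - P n) ((1 - P n) x) = (1 - P n) x := by
    intro n x
    simp only [sub_apply, one_apply_eq_self, map_sub, hP' n x]
    abel
  have hkpos : ∀ n, (0:ℝ) < k n := fun n => lt_of_lt_of_le one_pos (hk.2.1 n)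
  have hhpos : ∀ n, (0:ℝ) < h n := fun n => lt_of_lt_of_le one_pos (hh.2.1 n)
  have hhmono : Monotone h := hh.1.monotone
  constructor
  · rintro ⟨d, hd1, hdmono, hdich⟩
    have hdpos : ∀ n, (0:ℝ) < d n := fun n => lt_of_lt_of_le one_pos (hd1 n)
    set S : ℕ → ℝ := fun n => ∑ j ∈ Finset.range (n + 1), ‖P j‖ with hSdef
    have hSnn : ∀ n, 0 ≤ S n := fun n => Finset.sum_nonneg fun j _ => norm_nonneg _
    have hSmono : Monotone S := by
      intro a b hab
      exact Finset.sum_le_sum_of_subset_of_nonneg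
        (Finset.range_subset_range.mpr (by omega)) (fun j _ _ => norm_nonneg _)
    have hPle : ∀ j n, j ≤ n → ‖P j‖ ≤ S n := fun j n hjn =>
      Finset.single_le_sum (f := fun j => ‖P j‖) (fun i _ => norm_nonneg _)
        (Finset.mem_range.mpr (by omega))
    refine ⟨fun _ x => ‖x‖, ⟨fun n => ⟨fun x y => norm_add_le x y,
      fun a x => by show ‖a • x‖ = |a| * ‖x‖; rw [norm_smul, Real.norm_eq_abs], fun x => norm_eq_zero⟩,
      fun _ => 1, fun _ => le_rfl, monotone_const, fun n x => ⟨le_rfl, ?_⟩⟩,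
      fun n => ((n : ℝ) + 1) * d n * (1 + S n), ?_, ?_, ?_⟩
    · have : x = P n x + (1 - P n) x := by simp
      calc ‖x‖ = ‖P n x + (1 - P n) x‖ := by rw [← this]
        _ ≤ ‖P n x‖ + ‖(1 - P n) x‖ := norm_add_le _ _
        _ = 1 * (‖P n x‖ + ‖(1 - P n) x‖) := (one_mul _).symm
    · intro n
      show (1:ℝ) ≤ ((n : ℝ) + 1) * d n * (1 + S n)
      have h1 : (1:ℝ) ≤ (n : ℝ) + 1 := by
        have : (0:ℝ) ≤ (n:ℝ) := Nat.cast_nonneg n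
        linarith
      nlinarith [hd1 n, hSnn n, hdpos n,
        mul_nonneg (Nat.cast_nonneg n : (0:ℝ) ≤ n) (hdpos n).le,
        mul_nonneg (mul_nonneg (Nat.cast_nonneg n : (0:ℝ) ≤ n) (hdpos n).le) (hSnn n),
        mul_nonneg (hdpos n).le (hSnn n)]
    · intro a b hab
      show ((a : ℝ) + 1) * d a * (1 + S a) ≤ ((b : ℝ) + 1) * d b * (1 + S b)
      have h1 : (0:ℝ) ≤ (a : ℝ) + 1 := by positivity
      have h2 : (0:ℝ) ≤ d a := (hdpos a).le
      have h3 : (0:ℝ) ≤ 1 + S a := by nlinarith [hSnn a]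
      have hcast : ((a:ℝ) + 1) ≤ (b:ℝ) + 1 := by
        have : (a:ℝ) ≤ (b:ℝ) := by exact_mod_cast hab
        linarith
      exact mul_le_mul
        (mul_le_mul hcast (hdmono hab) (hdpos a).le (by positivity))
        (by linarith [hSmono hab]) h3
        (mul_nonneg (by positivity) (hdpos b).le)
    · intro m n hmn x
      constructor
      · calc (∑ j ∈ Finset.range (n + 1), h m * ‖evol A m j (P j x)‖)
            ≤ ∑ j ∈ Finset.range (n + 1), d n * (1 + S n) * (h n * ‖x‖) := by
              apply Finset.sum_le_sum
              intro j hj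
              have hjn : j ≤ n := Nat.lt_succ_iff.mp (Finset.mem_range.mp hj)
              have hjm : j ≤ m := le_trans hjn hmn
              have key := (hdich m j hjm x).1
              have h1 : ‖P j x‖ ≤ S n * ‖x‖ := by
                calc ‖P j x‖ ≤ ‖P j‖ * ‖x‖ := (P j).le_opNorm x
                  _ ≤ S n * ‖x‖ := by
                    gcongr
                    exact hPle j n hjn
              calc h m * ‖evol A m j (P j x)‖ ≤ d j * (h j * ‖P j x‖) := key
                _ ≤ d n * (h n * (S n * ‖x‖)) := by
                    refine mul_le_mul (hdmono hjn)
                      (mul_le_mul (hhmono hjn) h1 (norm_nonneg _) (hhpos n).le)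
                      (mul_nonneg (hhpos j).le (norm_nonneg _)) (hdpos n).le
                _ ≤ d n * (1 + S n) * (h n * ‖x‖) := by
                    nlinarith [(hdpos n).le, (hhpos n).le, norm_nonneg x, hSnn n,
                      mul_nonneg (mul_nonneg (hdpos n).le (hhpos n).le) (norm_nonneg x)]
          _ = ((n : ℝ) + 1) * (d n * (1 + S n) * (h n * ‖x‖)) := by
              rw [Finset.sum_const, Finset.card_range]
              push_cast
              ring
          _ = ((n : ℝ) + 1) * d n * (1 + S n) * (h n * ‖x‖) := by ring
      · calc (∑ j ∈ Finset.range (n + 1), ‖B m j ((1 - P m) x)‖ / k j)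
            ≤ ∑ j ∈ Finset.range (n + 1), d m * (1 + S m) * (‖x‖ / k m) := by
              apply Finset.sum_le_sum
              intro j hj
              have hjn : j ≤ n := Nat.lt_succ_iff.mp (Finset.mem_range.mp hj)
              have hjm : j ≤ m := le_trans hjn hmn
              set y := B m j ((1 - P m) x) with hy
              have hB3 := (hB m j hjm).2.2
              have hy1 : (1 - P j) y = y := by
                have := congrArg (fun T : X →L[ℝ] X => T x) hB3
                simp only [comp_apply] at this
                exact this.symm
              have hB1 := (hB m j hjm).1
              have hy2 : evol A m j y = (1 - P m) x := by
                have := congrArg (fun T : X →L[ℝ] X => T x) hB1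
                simp only [comp_apply] at this
                exact this
              have key := (hdich m j hjm y).2
              rw [hy1, hy2] at key
              -- key : k m * ‖y‖ ≤ d m * (k j * ‖(1 - P m) x‖)
              have hQx : ‖(1 - P m) x‖ ≤ (1 + S m) * ‖x‖ := by
                have : ‖(1 - P m) x‖ = ‖x - P m x‖ := by simp
                rw [this]
                calc ‖x - P m x‖ ≤ ‖x‖ + ‖P m x‖ := norm_sub_le _ _
                  _ ≤ ‖x‖ + ‖P m‖ * ‖x‖ := by gcongr; exact (P m).le_opNorm x
                  _ ≤ ‖x‖ + S m * ‖x‖ := by gcongr; exact hPle m m le_rfl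
                  _ = (1 + S m) * ‖x‖ := by ring
              have hstep : k m * ‖y‖ ≤ d m * (k j * ((1 + S m) * ‖x‖)) := by
                refine le_trans key ?_
                refine mul_le_mul_of_nonneg_left ?_ (hdpos m).le
                exact mul_le_mul_of_nonneg_left hQx (hkpos j).le
              rw [div_le_iff₀ (hkpos j)]
              have h5 : d m * (1 + S m) * (‖x‖ / k m) * k j
                  = d m * (1 + S m) * ‖x‖ * k j / k m := by ring
              rw [h5, le_div_iff₀ (hkpos m)]
              nlinarith [hstep]
          _ = ((n : ℝ) + 1) * (d m * (1 + S m) * (‖x‖ / k m)) := by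
              rw [Finset.sum_const, Finset.card_range]
              push_cast
              ring
          _ ≤ ((m : ℝ) + 1) * d m * (1 + S m) * (‖x‖ / k m) := by
              have h1 : ((n : ℝ) + 1) ≤ (m : ℝ) + 1 := by exact_mod_cast Nat.succ_le_succ hmn
              have h2 : 0 ≤ d m * (1 + S m) * (‖x‖ / k m) :=
                mul_nonneg (mul_nonneg (hdpos m).le (by linarith [hSnn m]))
                  (div_nonneg (norm_nonneg x) (hkpos m).le)
              nlinarith [mul_le_mul_of_nonneg_right h1 h2]
  · rintro ⟨N, ⟨hNseq, c, hc1, hcmono, hcomp⟩, b, hb1, hbmono, hmain⟩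
    have hNnn : ∀ j (y : X), 0 ≤ N j y := fun j y =>
      le_trans (norm_nonneg y) (hcomp j y).1
    have hbpos : ∀ n, (0:ℝ) < b n := fun n => lt_of_lt_of_le one_pos (hb1 n)
    have hcpos : ∀ n, (0:ℝ) < c n := fun n => lt_of_lt_of_le one_pos (hc1 n)
    refine ⟨fun n => b n * c n, fun n => ?_, ?_, ?_⟩
    · show (1:ℝ) ≤ b n * c n
      nlinarith [hb1 n, hc1 n]
    · intro a b' hab
      exact mul_le_mul (hbmono hab) (hcmono hab) (hcpos a).le (hbpos b').le
    · intro m n hmn x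
      constructor
      · -- first dichotomy inequality
        have key := (hmain m n hmn (P n x)).1
        have single : h m * N m (evol A m n (P n (P n x))) ≤
            ∑ j ∈ Finset.range (n + 1), h m * N m (evol A m j (P j (P n x))) :=
          Finset.single_le_sum
            (f := fun j => h m * N m (evol A m j (P j (P n x))))
            (fun j _ => mul_nonneg (hhpos m).le (hNnn _ _))
            (Finset.mem_range.mpr (Nat.lt_succ_self n))
        rw [hP' n x] at single
        have h2 : h m * N m (evol A m n (P n x)) ≤ b n * (h n * N n (P n x)) :=
          le_trans single key
        have hQP : (1 - P n) (P n x) = 0 := by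
          simp only [sub_apply, one_apply_eq_self, hP' n x, sub_self]
        have hNle : N n (P n x) ≤ c n * ‖P n x‖ := by
          have := (hcomp n (P n x)).2
          rw [hP' n x, hQP] at this
          simpa using this
        have hnorm : ‖evol A m n (P n x)‖ ≤ N m (evol A m n (P n x)) :=
          (hcomp m _).1
        calc h m * ‖evol A m n (P n x)‖ ≤ h m * N m (evol A m n (P n x)) := by
              gcongr
              exact (hhpos m).le
          _ ≤ b n * (h n * N n (P n x)) := h2
          _ ≤ b n * (h n * (c n * ‖P n x‖)) := by
              gcongr
              · exact (hbpos n).le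
              · exact (hhpos n).le
          _ = b n * c n * (h n * ‖P n x‖) := by ring
      · -- second dichotomy inequality
        set y := evol A m n ((1 - P n) x) with hy
        have hyQ : (1 - P m) y = y := by
          rw [hy, evol_comm_Q hinv m n hmn x]
          exact hQ' m _
        have hBy : B m n ((1 - P m) y) = (1 - P n) x := by
          rw [hyQ, hy]
          have := congrArg (fun T : X →L[ℝ] X => T x) (hB m n hmn).2.1
          simp only [comp_apply] at this
          exact this
        have key := (hmain m n hmn y).2
        have single : N n (B m n ((1 - P m) y)) / k n ≤
            ∑ j ∈ Finset.range (n + 1), N j (B m j ((1 - P m) y)) / k j :=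
          Finset.single_le_sum
            (f := fun j => N j (B m j ((1 - P m) y)) / k j)
            (fun j _ => div_nonneg (hNnn _ _) (hkpos j).le)
            (Finset.mem_range.mpr (Nat.lt_succ_self n))
        rw [hBy] at single
        have h2 : N n ((1 - P n) x) / k n ≤ b m * (N m y / k m) :=
          le_trans single key
        have hPy : P m y = 0 := by
          have : P m ((1 - P m) y) = 0 := by
            simp only [sub_apply, one_apply_eq_self, map_sub, hP' m y, sub_self]
          rwa [hyQ] at this
        have hNy : N m y ≤ c m * ‖y‖ := by
          have := (hcomp m y).2
          rw [hPy, hyQ] at this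
          simpa using this
        have h3 : ‖(1 - P n) x‖ / k n ≤ b m * (c m * ‖y‖ / k m) := by
          calc ‖(1 - P n) x‖ / k n ≤ N n ((1 - P n) x) / k n := by
                gcongr <;> first | exact (hkpos n).le | exact (hcomp n _).1
            _ ≤ b m * (N m y / k m) := h2
            _ ≤ b m * (c m * ‖y‖ / k m) := by
                gcongr <;>
                  first | exact (hbpos m).le | exact (hkpos m).le | exact hNy
        rw [← mul_div_assoc] at h3
        rw [div_le_div_iff₀ (hkpos n) (hkpos m)] at h3
        show k m * ‖(1 - P n) x‖ ≤ b m * c m * (k n * ‖y‖)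
        nlinarith [h3]

end
end
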